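/- With m(t_2) denoting the minimum over k of h_x(k) = t_0 + t_1 cos k + t_2 cos 2k (for fixed t_0, t_1 > 0 and varying t_2 > 0), the maximum of m(t_2) over t_2 > 0 equals t_0 - t_1/√2 and is attained at t_2 = t_1/(2√2). Consequently, if t_0 ≤ t_1/√2, then for every t_2 > 0 there exists a real k with h_x(k) ≤ 0. -/

import Mathlib

open Real

/-- With `m(t_2)` the minimum over `k` of
`h_x(k) = t_0 + t_1 cos k + t_2 cos 2k` (equal to `t_0 - t_1 + t_2` for `t_2 ≤ t_1/4`
and `t_0 - t_1²/(8t_2) - t_2` for `t_2 > t_1/4`), the maximum of `m(t_2)` over `t_2 > 0`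
equals `t_0 - t_1/√2`, attained at `t_2 = t_1/(2√2)`. Consequently, if `t_0 ≤ t_1/√2`,
then for every `t_2 > 0` there exists a real `k` with `h_x(k) ≤ 0`. -/
theorem stmt11 (t0 t1 : ℝ) (ht0 : 0 < t0) (ht1 : 0 < t1)
    (m : ℝ → ℝ)
    (hm : m = fun t2 => if t2 ≤ t1 / 4 then t0 - t1 + t2 else t0 - t1 ^ 2 / (8 * t2) - t2) :
    (∀ t2 : ℝ, 0 < t2 → m t2 ≤ t0 - t1 / Real.sqrt 2) ∧
    m (t1 / (2 * Real.sqrt 2)) = t0 - t1 / Real.sqrt 2 ∧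
    (t0 ≤ t1 / Real.sqrt 2 → ∀ t2 : ℝ, 0 < t2 →
      ∃ k : ℝ, t0 + t1 * Real.cos k + t2 * Real.cos (2 * k) ≤ 0) := by
  have hs2 : (0:ℝ) < Real.sqrt 2 := Real.sqrt_pos.mpr (by norm_num)
  have hsq : Real.sqrt 2 ^ 2 = 2 := Real.sq_sqrt (by norm_num)
  have hs1 : (1:ℝ) < Real.sqrt 2 := by nlinarith
  have key : ∀ t2 : ℝ, 0 < t2 → m t2 ≤ t0 - t1 / Real.sqrt 2 := by
    intro t2 ht2
    subst hm
    simp only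
    split_ifs with h
    · -- t2 ≤ t1/4 ≤ t1 - t1/√2
      have hd : t1 / Real.sqrt 2 ≤ 3 * t1 / 4 := by
        rw [div_le_div_iff₀ hs2 (by norm_num)]
        nlinarith
      linarith
    · -- AM-GM
      have h8 : (0:ℝ) < 8 * t2 := by linarith
      rw [sub_sub, sub_le_sub_iff_left, div_add' _ _ _ (ne_of_gt h8),
        le_div_iff₀ h8, div_mul_eq_mul_div, div_le_iff₀ hs2]
      nlinarith [sq_nonneg (t1 - 2 * Real.sqrt 2 * t2)]
  refine ⟨key, ?_, ?_⟩
  · have hgt : ¬ (t1 / (2 * Real.sqrt 2) ≤ t1 / 4) := by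
      rw [not_le, div_lt_div_iff₀ (by norm_num) (by positivity)]
      nlinarith
    subst hm
    simp only [if_neg hgt]
    have h2s : (2 * Real.sqrt 2) ≠ 0 := by positivity
    field_simp
    linear_combination (-4*t1) * hsq
  · intro hle t2 ht2
    by_cases h : t2 ≤ t1 / 4
    · refine ⟨Real.pi, ?_⟩
      have := key t2 ht2
      rw [hm] at this
      simp only [if_pos h] at this
      simp only [Real.cos_pi, show (2:ℝ) * Real.pi = 2 * Real.pi from rfl]
      rw [show Real.cos (2 * Real.pi) = 1 by simp [Real.cos_two_pi]]
      nlinarith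
    · set c : ℝ := -t1 / (4 * t2) with hc
      have hcb : -1 ≤ c ∧ c ≤ 1 := by
        constructor
        · rw [hc, neg_div, neg_le_neg_iff, div_le_one (by linarith)]
          linarith [not_le.mp h]
        · rw [hc]
          have : -t1 / (4 * t2) < 0 := div_neg_of_neg_of_pos (by linarith) (by linarith)
          linarith
      refine ⟨Real.arccos c, ?_⟩
      rw [Real.cos_two_mul, Real.cos_arccos hcb.1 hcb.2]
      have := key t2 ht2
      rw [hm] at this
      simp only [if_neg h] at this
      have ht2' : t2 ≠ 0 := ne_of_gt ht2
      have hcval : c = -t1 / (4 * t2) := hc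
      have : t0 + t1 * c + t2 * (2 * c ^ 2 - 1) = t0 - t1 ^ 2 / (8 * t2) - t2 := by
        rw [hcval]; field_simp; ring
      rw [this]
      calc t0 - t1 ^ 2 / (8 * t2) - t2 ≤ t0 - t1 / Real.sqrt 2 := by
            have := key t2 ht2; rw [hm] at this; simpa [if_neg h] using this
        _ ≤ 0 := by linarith
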